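/- Let p > 0 and V₁, V₂ > 0. For all real numbers a₁ < a₂ < a₃ with ∫_{a₁}^{a₂} |x|^p dx = V₁ and ∫_{a₂}^{a₃} |x|^p dx = V₂, the weighted perimeter satisfies |a₁|^p + |a₂|^p + |a₃|^p ≥ ((p+1)V₁)^{p/(p+1)} + ((p+1)V₂)^{p/(p+1)}, with equality for the pair of adjacent intervals meeting at the origin, i.e., a₂ = 0, a₁ = −((p+1)V₁)^{1/(p+1)}, a₃ = ((p+1)V₂)^{1/(p+1)}. -/

import Mathlib

open Real

private lemma dd_cont (p : ℝ) (hp : 0 < p) : Continuous (fun x : ℝ => |x| ^ p) :=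
  continuous_abs.rpow_const (fun _ => Or.inr hp.le)

private lemma dd_deriv (p : ℝ) (hp : 0 < p) (x : ℝ) :
    HasDerivAt (fun y : ℝ => y * |y| ^ p / (p + 1)) (|x| ^ p) x := by
  have hp1 : p + 1 ≠ 0 := by positivity
  rcases lt_trichotomy x 0 with hx | hx | hx
  · have h : HasDerivAt (fun y : ℝ => -((-y) ^ (p + 1)) / (p + 1)) (|x| ^ p) x := by
      have h1 : HasDerivAt (fun y : ℝ => (-y) ^ (p + 1))
          ((p + 1) * (-x) ^ (p + 1 - 1) * (-1)) x := by
        exact (Real.hasDerivAt_rpow_const (p := p + 1) (Or.inl (neg_ne_zero.2 hx.ne))).comp x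
          (hasDerivAt_neg x)
      have := (h1.neg).div_const (p + 1)
      refine this.congr_deriv ?_
      rw [abs_of_neg hx, add_sub_cancel_right]
      field_simp
    apply h.congr_of_eventuallyEq
    filter_upwards [eventually_lt_nhds hx] with y hy
    rw [abs_of_neg hy]
    have : y * (-y) ^ p = -((-y) ^ (p + 1)) := by
      rw [Real.rpow_add_one (neg_ne_zero.2 hy.ne) p]
      ring
    rw [this]
  · subst hx
    rw [abs_zero, Real.zero_rpow hp.ne']
    rw [hasDerivAt_iff_tendsto_slope]
    have : ∀ y : ℝ, y ≠ 0 → slope (fun y : ℝ => y * |y| ^ p / (p + 1)) 0 y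
        = |y| ^ p / (p + 1) := by
      intro y hy
      rw [slope_def_field]
      field_simp
      ring
    apply Filter.Tendsto.congr' _ ?_
    · exact fun y => |y| ^ p / (p + 1)
    · filter_upwards [self_mem_nhdsWithin] with y hy
      exact (this y hy).symm
    · have : Filter.Tendsto (fun y : ℝ => |y| ^ p / (p + 1)) (nhds 0) (nhds 0) := by
        have h1 := ((dd_cont p hp).div_const (p + 1)).continuousAt (x := (0:ℝ))
        simpa [ContinuousAt, Real.zero_rpow hp.ne'] using h1
      exact this.mono_left nhdsWithin_le_nhds
  · have h : HasDerivAt (fun y : ℝ => y ^ (p + 1) / (p + 1)) (|x| ^ p) x := by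
      have h1 := Real.hasDerivAt_rpow_const (x := x) (p := p + 1) (Or.inl hx.ne')
      have := h1.div_const (p + 1)
      refine this.congr_deriv ?_
      rw [abs_of_pos hx, add_sub_cancel_right]
      field_simp
    apply h.congr_of_eventuallyEq
    filter_upwards [eventually_gt_nhds hx] with y hy
    rw [abs_of_pos hy, Real.rpow_add_one hy.ne' p]
    ring

private lemma dd_integral (p : ℝ) (hp : 0 < p) (a b : ℝ) :
    (∫ x in a..b, |x| ^ p) = (b * |b| ^ p - a * |a| ^ p) / (p + 1) := by
  rw [intervalIntegral.integral_eq_sub_of_hasDerivAt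
    (fun x _ => dd_deriv p hp x) ((dd_cont p hp).intervalIntegrable a b)]
  ring

private lemma dd_subadd {q : ℝ} (hq0 : 0 ≤ q) (hq1 : q ≤ 1) {s t : ℝ}
    (hs : 0 ≤ s) (ht : 0 ≤ t) : (s + t) ^ q ≤ s ^ q + t ^ q := by
  have h := NNReal.rpow_add_le_add_rpow s.toNNReal t.toNNReal hq0 hq1
  have h2 : ((s.toNNReal + t.toNNReal : NNReal) : ℝ) ^ q ≤
      ((s.toNNReal : ℝ)) ^ q + ((t.toNNReal : ℝ)) ^ q := by
    exact_mod_cast h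
  rw [← Real.toNNReal_add hs ht] at h2
  simpa [Real.coe_toNNReal _ hs, Real.coe_toNNReal _ ht,
    Real.coe_toNNReal _ (add_nonneg hs ht)] using h2

private lemma dd_abs_rpow (p : ℝ) (hp : 0 < p) (x : ℝ) :
    |x * |x| ^ p| ^ (p / (p + 1)) = |x| ^ p := by
  have hp1 : p + 1 ≠ 0 := by positivity
  rw [abs_mul, abs_of_nonneg (Real.rpow_nonneg (abs_nonneg x) p), mul_comm,
    ← Real.rpow_add_one' (abs_nonneg x) (by positivity),
    ← Real.rpow_mul (abs_nonneg x)]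
  congr 1
  field_simp

/-- In ℝ¹ with density |x|^p, among double bubbles of adjacent intervals
    [a₁,a₂], [a₂,a₃] of given weighted lengths V₁, V₂, the weighted perimeter
    |a₁|^p + |a₂|^p + |a₃|^p is at least
    ((p+1)V₁)^(p/(p+1)) + ((p+1)V₂)^(p/(p+1)), with equality for the pair of
    adjacent intervals meeting at the origin. -/
theorem double_bubble_one_dim (p V₁ V₂ : ℝ) (hp : 0 < p) (hV₁ : 0 < V₁)
    (hV₂ : 0 < V₂) :
    (∀ a₁ a₂ a₃ : ℝ, a₁ < a₂ → a₂ < a₃ →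
      (∫ x in a₁..a₂, |x| ^ p) = V₁ → (∫ x in a₂..a₃, |x| ^ p) = V₂ →
      ((p + 1) * V₁) ^ (p / (p + 1)) + ((p + 1) * V₂) ^ (p / (p + 1)) ≤
        |a₁| ^ p + |a₂| ^ p + |a₃| ^ p) ∧
    (∫ x in (-(((p + 1) * V₁) ^ ((1:ℝ) / (p + 1))))..(0:ℝ), |x| ^ p) = V₁ ∧
    (∫ x in (0:ℝ)..(((p + 1) * V₂) ^ ((1:ℝ) / (p + 1))), |x| ^ p) = V₂ ∧
    |(-(((p + 1) * V₁) ^ ((1:ℝ) / (p + 1))))| ^ p + |(0:ℝ)| ^ p +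
        |((p + 1) * V₂) ^ ((1:ℝ) / (p + 1))| ^ p =
      ((p + 1) * V₁) ^ (p / (p + 1)) + ((p + 1) * V₂) ^ (p / (p + 1)) := by
  have hp1 : (0:ℝ) < p + 1 := by linarith
  set q : ℝ := p / (p + 1) with hqdef
  have hq0 : 0 ≤ q := by positivity
  have hq1 : q ≤ 1 := by
    rw [hqdef, div_le_one hp1]; linarith
  have hPV₁ : 0 < (p + 1) * V₁ := by positivity
  have hPV₂ : 0 < (p + 1) * V₂ := by positivity
  -- exponent arithmetic
  have hexp : (1 : ℝ) / (p + 1) * (p + 1) = 1 := by field_simp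
  constructor
  · intro a₁ a₂ a₃ h12 h23 hI₁ hI₂
    have e1 : (p + 1) * V₁ = a₂ * |a₂| ^ p - a₁ * |a₁| ^ p := by
      rw [← hI₁, dd_integral p hp]; field_simp
    have e2 : (p + 1) * V₂ = a₃ * |a₃| ^ p - a₂ * |a₂| ^ p := by
      rw [← hI₂, dd_integral p hp]; field_simp
    have habs : ∀ x : ℝ, |x| ^ p = |x * |x| ^ p| ^ q := fun x => (dd_abs_rpow p hp x).symm
    rcases le_or_gt 0 a₂ with h2 | h2
    · -- a₂ ≥ 0, ψ a₂ ≥ 0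
      have hψ2 : 0 ≤ a₂ * |a₂| ^ p := by positivity
      have b2 : ((p + 1) * V₂) ^ q ≤ |a₃| ^ p := by
        rw [habs a₃]
        exact Real.rpow_le_rpow hPV₂.le (by rw [e2]; linarith [neg_abs_le (a₃ * |a₃| ^ p), le_abs_self (a₃ * |a₃| ^ p)]) hq0
      have b1 : ((p + 1) * V₁) ^ q ≤ |a₁| ^ p + |a₂| ^ p := by
        calc ((p + 1) * V₁) ^ q ≤ (|a₁ * |a₁| ^ p| + |a₂ * |a₂| ^ p|) ^ q := by
              refine Real.rpow_le_rpow hPV₁.le ?_ hq0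
              rw [e1]
              have := le_abs_self (a₂ * |a₂| ^ p)
              have := neg_abs_le (a₁ * |a₁| ^ p)
              linarith
          _ ≤ |a₁ * |a₁| ^ p| ^ q + |a₂ * |a₂| ^ p| ^ q :=
              dd_subadd hq0 hq1 (abs_nonneg _) (abs_nonneg _)
          _ = |a₁| ^ p + |a₂| ^ p := by rw [← habs a₁, ← habs a₂]
      linarith
    · -- a₂ < 0, ψ a₂ ≤ 0
      have hψ2 : a₂ * |a₂| ^ p ≤ 0 := by
        apply mul_nonpos_of_nonpos_of_nonneg h2.le (by positivity)
      have b1 : ((p + 1) * V₁) ^ q ≤ |a₁| ^ p := by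
        rw [habs a₁]
        exact Real.rpow_le_rpow hPV₁.le (by rw [e1]; linarith [neg_abs_le (a₁ * |a₁| ^ p)]) hq0
      have b2 : ((p + 1) * V₂) ^ q ≤ |a₂| ^ p + |a₃| ^ p := by
        calc ((p + 1) * V₂) ^ q ≤ (|a₂ * |a₂| ^ p| + |a₃ * |a₃| ^ p|) ^ q := by
              refine Real.rpow_le_rpow hPV₂.le ?_ hq0
              rw [e2]
              have := le_abs_self (a₃ * |a₃| ^ p)
              have := neg_abs_le (a₂ * |a₂| ^ p)
              linarith
          _ ≤ |a₂ * |a₂| ^ p| ^ q + |a₃ * |a₃| ^ p| ^ q :=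
              dd_subadd hq0 hq1 (abs_nonneg _) (abs_nonneg _)
          _ = |a₂| ^ p + |a₃| ^ p := by rw [← habs a₂, ← habs a₃]
      linarith
  · set c₁ : ℝ := ((p + 1) * V₁) ^ ((1:ℝ)/(p+1)) with hc₁
    set c₂ : ℝ := ((p + 1) * V₂) ^ ((1:ℝ)/(p+1)) with hc₂
    have hc₁pos : 0 < c₁ := Real.rpow_pos_of_pos hPV₁ _
    have hc₂pos : 0 < c₂ := Real.rpow_pos_of_pos hPV₂ _
    have hc₁p : c₁ ^ (p + 1) = (p + 1) * V₁ := by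
      rw [hc₁, ← Real.rpow_mul hPV₁.le, hexp, Real.rpow_one]
    have hc₂p : c₂ ^ (p + 1) = (p + 1) * V₂ := by
      rw [hc₂, ← Real.rpow_mul hPV₂.le, hexp, Real.rpow_one]
    have hmul : ∀ c : ℝ, 0 < c → c * c ^ p = c ^ (p + 1) := by
      intro c hc
      rw [Real.rpow_add_one hc.ne' p]; ring
    refine ⟨?_, ?_, ?_⟩
    · rw [dd_integral p hp]
      simp only [abs_neg, abs_of_pos hc₁pos, abs_zero]
      rw [Real.zero_rpow hp.ne']
      have : -c₁ * c₁ ^ p = -(c₁ * c₁ ^ p) := by ring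
      rw [this, hmul c₁ hc₁pos, hc₁p]
      field_simp
      ring
    · rw [dd_integral p hp]
      simp only [abs_of_pos hc₂pos, abs_zero]
      rw [Real.zero_rpow hp.ne', hmul c₂ hc₂pos, hc₂p]
      field_simp
      ring
    · simp only [abs_neg, abs_of_pos hc₁pos, abs_of_pos hc₂pos, abs_zero]
      rw [Real.zero_rpow hp.ne']
      have h1 : c₁ ^ p = ((p + 1) * V₁) ^ q := by
        rw [hc₁, ← Real.rpow_mul hPV₁.le, hqdef, one_div, inv_mul_eq_div]
      have h2 : c₂ ^ p = ((p + 1) * V₂) ^ q := by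
        rw [hc₂, ← Real.rpow_mul hPV₂.le, hqdef, one_div, inv_mul_eq_div]
      rw [h1, h2]; ring
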